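/- The kernel of Π_E (equivalently, the fixed-point set of the complementary projection Π_F := id − Π_E) equals the sum of subspaces range(d₀⁻¹) + range(d ∘ d₀⁻¹): { α ∈ V : Π_E α = 0 } = Im d₀⁻¹ + Im(d ∘ d₀⁻¹). -/

import Mathlib

/-- The kernel of `Π_E` (the fixed-point set of `Π_F := id − Π_E`)
equals `Im d₀⁻¹ + Im (d ∘ d₀⁻¹)`. -/
theorem ker_PiE_eq_range_sup_range
    {V : Type*} [NormedAddCommGroup V] [InnerProductSpace ℝ V] [FiniteDimensional ℝ V]
    (d₀ dinv : V →ₗ[ℝ] V) (hd₀ : d₀ ∘ₗ d₀ = 0)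
    (hpinv₁ : (LinearMap.range d₀)ᗮ ≤ LinearMap.ker dinv)
    (hpinv₂ : LinearMap.range dinv ≤ (LinearMap.ker d₀)ᗮ)
    (hpinv₃ : ∀ v : V, d₀ (dinv v) = (Submodule.orthogonalProjection (LinearMap.range d₀) v : V))
    (d : V →ₗ[ℝ] V) (hd : d ∘ₗ d = 0)
    (D : V →ₗ[ℝ] V) (hD : D = dinv ∘ₗ (d - d₀))
    (N : ℕ) (hDnil : D ^ (N + 1) = 0)
    (P : V →ₗ[ℝ] V) (hP : P = ∑ k ∈ Finset.range (N + 1), ((-1 : ℝ)) ^ k • D ^ k)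
    (Q : V →ₗ[ℝ] V) (hQ : Q = P ∘ₗ dinv)
    (PiE : V →ₗ[ℝ] V) (hPiE : PiE = LinearMap.id - Q ∘ₗ d - d ∘ₗ Q) :
    LinearMap.ker PiE = LinearMap.range dinv ⊔ LinearMap.range (d ∘ₗ dinv) := by
  -- range d₀ ≤ ker d₀
  have hrk : LinearMap.range d₀ ≤ LinearMap.ker d₀ := by
    rintro x ⟨y, rfl⟩
    simpa using LinearMap.congr_fun hd₀ y
  -- dinv ∘ dinv = 0
  have hdinv2 : dinv ∘ₗ dinv = 0 := by
    ext v
    have h1 : dinv v ∈ (LinearMap.range d₀)ᗮ :=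
      Submodule.orthogonal_le hrk (hpinv₂ ⟨v, rfl⟩)
    simpa using hpinv₁ h1
  -- dinv ∘ d₀ ∘ dinv = dinv
  have hdd : dinv ∘ₗ d₀ ∘ₗ dinv = dinv := by
    ext v
    have hmem : v - (Submodule.orthogonalProjection (LinearMap.range d₀) v : V)
        ∈ (LinearMap.range d₀)ᗮ := by
          rw [← Submodule.starProjection_apply]; exact Submodule.sub_starProjection_mem_orthogonal v
    have h0 : dinv (v - (Submodule.orthogonalProjection (LinearMap.range d₀) v : V)) = 0 := hpinv₁ hmem
    have h0' : dinv v = dinv ((Submodule.orthogonalProjection (LinearMap.range d₀) v : V)) := by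
      have := h0
      rw [map_sub, sub_eq_zero] at this
      exact this
    simp [LinearMap.comp_apply, hpinv₃, ← h0']
    rw [Submodule.starProjection_apply, ← h0']
  -- P as geometric series: (1 + D) * P = 1
  have hnegpow : ∀ k, (-D) ^ k = ((-1 : ℝ)) ^ k • D ^ k := fun k => by
    rw [← neg_one_smul ℝ D, smul_pow]
  have hPgeom : (1 + D) * P = 1 := by
    have hPe : P = ∑ k ∈ Finset.range (N + 1), (-D) ^ k := by
      rw [hP]
      exact (Finset.sum_congr rfl fun k _ => hnegpow k).symm
    have hnil' : (-D) ^ (N + 1) = 0 := by rw [hnegpow, hDnil, smul_zero]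
    rw [hPe]
    have h := mul_neg_geom_sum (-D) (N + 1)
    rw [sub_neg_eq_add, hnil', sub_zero] at h
    exact h
  have hQcomp : (1 + D) * Q = dinv := by
    rw [hQ, ← Module.End.mul_eq_comp, ← mul_assoc, hPgeom, one_mul]
  -- Q = dinv ∘ (1 - (d - d₀) ∘ Q)
  have hQsub : Q = dinv - D ∘ₗ Q := by
    have h := hQcomp
    rw [add_mul, one_mul, Module.End.mul_eq_comp] at h
    rw [← h]; abel
  have hQform : Q = dinv ∘ₗ (LinearMap.id - (d - d₀) ∘ₗ Q) := by
    have h2 : dinv ∘ₗ (LinearMap.id - (d - d₀) ∘ₗ Q) = dinv - D ∘ₗ Q := by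
      rw [hD]; ext v
      simp [LinearMap.sub_apply, LinearMap.comp_apply]
    rw [h2, ← hQsub]
  -- dinv ∘ d ∘ dinv = (1 + D) ∘ dinv
  have hkey : dinv ∘ₗ d ∘ₗ dinv = dinv + D ∘ₗ dinv := by
    have hDe : dinv ∘ₗ d = D + dinv ∘ₗ d₀ := by
      rw [hD]; ext v; simp [LinearMap.comp_apply]
    calc dinv ∘ₗ d ∘ₗ dinv = (dinv ∘ₗ d) ∘ₗ dinv := by rw [LinearMap.comp_assoc]
      _ = (D + dinv ∘ₗ d₀) ∘ₗ dinv := by rw [hDe]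
      _ = D ∘ₗ dinv + dinv ∘ₗ d₀ ∘ₗ dinv := by
          rw [LinearMap.add_comp, LinearMap.comp_assoc]
      _ = dinv + D ∘ₗ dinv := by rw [hdd, add_comm]
  -- D commutes with P
  have hcomm : Commute D P := by
    rw [hP]
    exact Commute.sum_right _ _ _ fun k _ =>
      ((Commute.refl D).pow_right k).smul_right _
  -- Q ∘ d ∘ dinv = dinv
  have hQddinv : Q ∘ₗ d ∘ₗ dinv = dinv := by
    have h1 : Q ∘ₗ d ∘ₗ dinv = P ∘ₗ (dinv ∘ₗ d ∘ₗ dinv) := by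
      rw [hQ]; rw [LinearMap.comp_assoc]
    rw [h1, hkey]
    have : P ∘ₗ (dinv + D ∘ₗ dinv) = (P * (1 + D)) ∘ₗ dinv := by
      rw [Module.End.mul_eq_comp]
      ext v
      simp [LinearMap.comp_apply, LinearMap.add_apply]
    rw [this, ← ((Commute.one_left P).add_left hcomm).eq, hPgeom]
    simp [Module.End.one_eq_id]
  -- Q ∘ dinv = 0
  have hQdinv : Q ∘ₗ dinv = 0 := by
    rw [hQ, LinearMap.comp_assoc, hdinv2, LinearMap.comp_zero]
  -- main equality
  ext α
  simp only [LinearMap.mem_ker]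
  constructor
  · intro hα
    have hα' : α = Q (d α) + d (Q α) := by
      have h := hα
      rw [hPiE] at h
      simp only [LinearMap.sub_apply, LinearMap.comp_apply, LinearMap.id_apply] at h
      rw [sub_sub, sub_eq_zero] at h
      exact h
    have h1 : Q (d α) ∈ LinearMap.range dinv :=
      ⟨((LinearMap.id : V →ₗ[ℝ] V) - (d - d₀) ∘ₗ Q) (d α), (LinearMap.congr_fun hQform (d α)).symm⟩
    have h2 : d (Q α) ∈ LinearMap.range (d ∘ₗ dinv) := by
      refine ⟨((LinearMap.id : V →ₗ[ℝ] V) - (d - d₀) ∘ₗ Q) α, ?_⟩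
      have := LinearMap.congr_fun hQform α
      simp only [LinearMap.comp_apply] at this ⊢
      rw [← this]
    exact Submodule.mem_sup.mpr ⟨_, h1, _, h2, hα'.symm⟩
  · intro hα
    rw [Submodule.mem_sup] at hα
    obtain ⟨x, ⟨a, rfl⟩, y, ⟨b, rfl⟩, rfl⟩ := hα
    have e1 := LinearMap.congr_fun hQddinv a
    have e2 := LinearMap.congr_fun hQdinv a
    have e3 := LinearMap.congr_fun hQddinv b
    have e4 := LinearMap.congr_fun hd (dinv b)
    have e5 := LinearMap.congr_fun hQdinv b
    simp only [LinearMap.comp_apply, LinearMap.zero_apply] at e1 e2 e3 e4 e5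
    rw [hPiE]
    simp only [LinearMap.sub_apply, LinearMap.comp_apply, LinearMap.id_apply, map_add,
      e1, e2, e3, e4, e5, map_zero]
    abel
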